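/- The recursively defined series-parallel graphs A_i and B_i (A_1 = single edge; B_i = parallel composition of two series compositions edge–A_i–edge; A_i = parallel composition of an edge with the series composition edge–B_{i−1}–edge) are bipartite and subcubic, with both terminals of degree two and different colors in a proper 2-coloring. -/

import Mathlib

/-- A two-terminal graph: a graph together with two designated terminal vertices. -/
structure TTG where
  V : Type
  G : SimpleGraph V
  s : V
  t : V

/-- The two-terminal graph consisting of a single edge. -/
def edgeTTG : TTG where
  V := Bool
  G := { Adj := fun x y => x ≠ y
         symm := ⟨fun _ _ h => h.symm⟩
         loopless := ⟨fun _ h => h rfl⟩ }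
  s := false
  t := true

attribute [reducible] edgeTTG

/-- The disjoint-union adjacency on the sum of the vertex types of two graphs. -/
def sumAdj (G₁ G₂ : TTG) : G₁.V ⊕ G₂.V → G₁.V ⊕ G₂.V → Prop
  | .inl a, .inl b => G₁.G.Adj a b
  | .inr a, .inr b => G₂.G.Adj a b
  | _, _ => False

theorem sumAdj_symm (G₁ G₂ : TTG) {a b : G₁.V ⊕ G₂.V} (h : sumAdj G₁ G₂ a b) :
    sumAdj G₁ G₂ b a := by
  cases a <;> cases b <;> simp only [sumAdj] at h ⊢ <;>
    first | exact h.symm | exact h.elim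

/-- Series composition: identify `t₁` with `s₂`. -/
def seriesTTG (G₁ G₂ : TTG) : TTG where
  V := Quotient (Relation.EqvGen.setoid fun x y : G₁.V ⊕ G₂.V =>
    x = Sum.inl G₁.t ∧ y = Sum.inr G₂.s)
  G := { Adj := fun x y => x ≠ y ∧ ∃ a b, Quotient.mk _ a = x ∧ Quotient.mk _ b = y ∧
           sumAdj G₁ G₂ a b
         symm := by
           constructor
           rintro x y ⟨h, a, b, ha, hb, hab⟩
           exact ⟨h.symm, b, a, hb, ha, sumAdj_symm G₁ G₂ hab⟩
         loopless := by constructor; rintro x ⟨h, -⟩; exact h rfl }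
  s := Quotient.mk _ (Sum.inl G₁.s)
  t := Quotient.mk _ (Sum.inr G₂.t)

/-- Parallel composition: identify `s₁` with `s₂` and `t₁` with `t₂`. -/
def parallelTTG (G₁ G₂ : TTG) : TTG where
  V := Quotient (Relation.EqvGen.setoid fun x y : G₁.V ⊕ G₂.V =>
    (x = Sum.inl G₁.s ∧ y = Sum.inr G₂.s) ∨ (x = Sum.inl G₁.t ∧ y = Sum.inr G₂.t))
  G := { Adj := fun x y => x ≠ y ∧ ∃ a b, Quotient.mk _ a = x ∧ Quotient.mk _ b = y ∧
           sumAdj G₁ G₂ a b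
         symm := by
           constructor
           rintro x y ⟨h, a, b, ha, hb, hab⟩
           exact ⟨h.symm, b, a, hb, ha, sumAdj_symm G₁ G₂ hab⟩
         loopless := by constructor; rintro x ⟨h, -⟩; exact h rfl }
  s := Quotient.mk _ (Sum.inl G₁.s)
  t := Quotient.mk _ (Sum.inl G₁.t)

/-- The graph `B` built from a graph `X`: the parallel composition of two copies of
edge–`X`–edge. -/
def Bfrom (X : TTG) : TTG :=
  parallelTTG (seriesTTG (seriesTTG edgeTTG X) edgeTTG)
    (seriesTTG (seriesTTG edgeTTG X) edgeTTG)

/-- The recursively defined series-parallel graphs `A_i`: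
`A_1` is a single edge; `A_{i+1}` is the parallel composition of an edge with
edge–`B_i`–edge, where `B_i = Bfrom (A_i)`. -/
def Agraph : ℕ → TTG
  | 0 => edgeTTG
  | 1 => edgeTTG
  | (n + 2) => parallelTTG edgeTTG
      (seriesTTG (seriesTTG edgeTTG (Bfrom (Agraph (n + 1)))) edgeTTG)

/-- The recursively defined series-parallel graphs `B_i`. -/
def Bgraph (n : ℕ) : TTG := Bfrom (Agraph n)

section SeriesLemmas

variable (G₁ G₂ : TTG)

lemma eqvgen_to {α : Type*} {r : α → α → Prop} {R : α → α → Prop} (hR : Equivalence R)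
    (h : ∀ a b, r a b → R a b) {a b : α} (h' : Relation.EqvGen r a b) : R a b := by
  induction h' with
  | rel x y hxy => exact h x y hxy
  | refl x => exact hR.refl x
  | symm x y _ ih => exact hR.symm ih
  | trans x y z _ _ ih1 ih2 => exact hR.trans ih1 ih2

def sInl (v : G₁.V) : (seriesTTG G₁ G₂).V := Quotient.mk _ (Sum.inl v)
def sInr (v : G₂.V) : (seriesTTG G₁ G₂).V := Quotient.mk _ (Sum.inr v)

lemma series_mk_eq {a b : G₁.V ⊕ G₂.V} :
    (Quotient.mk (Relation.EqvGen.setoid fun x y : G₁.V ⊕ G₂.V =>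
        x = Sum.inl G₁.t ∧ y = Sum.inr G₂.s) a = Quotient.mk _ b) ↔
    a = b ∨ (a = Sum.inl G₁.t ∧ b = Sum.inr G₂.s) ∨ (a = Sum.inr G₂.s ∧ b = Sum.inl G₁.t) := by
  constructor
  · intro h
    have h' := Quotient.exact h
    refine eqvgen_to (R := fun a b => a = b ∨ (a = Sum.inl G₁.t ∧ b = Sum.inr G₂.s) ∨
        (a = Sum.inr G₂.s ∧ b = Sum.inl G₁.t)) ?_ ?_ h'
    · constructor
      · intro x; exact Or.inl rfl
      · rintro x y (rfl | ⟨rfl, rfl⟩ | ⟨rfl, rfl⟩) <;> simp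
      · rintro x y z h1 h2
        rcases h1 with rfl | ⟨rfl, rfl⟩ | ⟨rfl, rfl⟩ <;>
          rcases h2 with rfl | ⟨h, rfl⟩ | ⟨h, rfl⟩ <;> simp_all
    · intro x y hxy; exact Or.inr (Or.inl hxy)
  · rintro (rfl | ⟨rfl, rfl⟩ | ⟨rfl, rfl⟩)
    · rfl
    · exact Quotient.sound (Relation.EqvGen.rel _ _ ⟨rfl, rfl⟩)
    · exact (Quotient.sound (Relation.EqvGen.rel _ _ ⟨rfl, rfl⟩)).symm

end SeriesLemmas
section SeriesLemmas2

variable {G₁ G₂ : TTG}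

lemma series_adj_iff {x y : (seriesTTG G₁ G₂).V} :
    (seriesTTG G₁ G₂).G.Adj x y ↔ x ≠ y ∧ ∃ a b, Quotient.mk _ a = x ∧ Quotient.mk _ b = y ∧
      sumAdj G₁ G₂ a b := Iff.rfl

lemma sInl_inj {a b : G₁.V} (h : sInl G₁ G₂ a = sInl G₁ G₂ b) : a = b := by
  rcases (series_mk_eq G₁ G₂).mp h with h | ⟨h1, h2⟩ | ⟨h1, h2⟩ <;> simp_all

lemma sInr_inj {a b : G₂.V} (h : sInr G₁ G₂ a = sInr G₁ G₂ b) : a = b := by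
  rcases (series_mk_eq G₁ G₂).mp h with h | ⟨h1, h2⟩ | ⟨h1, h2⟩ <;> simp_all

lemma sInl_eq_sInr {a : G₁.V} {b : G₂.V} :
    sInl G₁ G₂ a = sInr G₁ G₂ b ↔ a = G₁.t ∧ b = G₂.s := by
  constructor
  · intro h
    rcases (series_mk_eq G₁ G₂).mp h with h | ⟨h1, h2⟩ | ⟨h1, h2⟩ <;> simp_all
  · rintro ⟨rfl, rfl⟩
    exact Quotient.sound (Relation.EqvGen.rel _ _ ⟨rfl, rfl⟩)

lemma series_cases (x : (seriesTTG G₁ G₂).V) :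
    (∃ v, x = sInl G₁ G₂ v) ∨ (∃ v, x = sInr G₁ G₂ v) := by
  obtain ⟨a, rfl⟩ := Quotient.exists_rep x
  cases a with
  | inl v => exact Or.inl ⟨v, rfl⟩
  | inr v => exact Or.inr ⟨v, rfl⟩

lemma series_s : (seriesTTG G₁ G₂).s = sInl G₁ G₂ G₁.s := rfl
lemma series_t : (seriesTTG G₁ G₂).t = sInr G₁ G₂ G₂.t := rfl

lemma series_nbr_inl {v : G₁.V} (hv : v ≠ G₁.t) :
    (seriesTTG G₁ G₂).G.neighborSet (sInl G₁ G₂ v) = sInl G₁ G₂ '' (G₁.G.neighborSet v) := by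
  ext x
  simp only [SimpleGraph.mem_neighborSet, Set.mem_image]
  constructor
  · rintro ⟨hne, a, b, ha, hb, hab⟩
    have ha' : a = Sum.inl v := by
      rcases (series_mk_eq G₁ G₂).mp ha with h | ⟨h1, h2⟩ | ⟨h1, h2⟩ <;> simp_all [sInl]
    subst ha'
    cases b with
    | inl w => exact ⟨w, hab, hb⟩
    | inr w => exact hab.elim
  · rintro ⟨w, hw, rfl⟩
    refine ⟨?_, Sum.inl v, Sum.inl w, rfl, rfl, hw⟩
    intro h
    exact (G₁.G.ne_of_adj hw) (sInl_inj h)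

lemma series_nbr_inr {v : G₂.V} (hv : v ≠ G₂.s) :
    (seriesTTG G₁ G₂).G.neighborSet (sInr G₁ G₂ v) = sInr G₁ G₂ '' (G₂.G.neighborSet v) := by
  ext x
  simp only [SimpleGraph.mem_neighborSet, Set.mem_image]
  constructor
  · rintro ⟨hne, a, b, ha, hb, hab⟩
    have ha' : a = Sum.inr v := by
      rcases (series_mk_eq G₁ G₂).mp ha with h | ⟨h1, h2⟩ | ⟨h1, h2⟩ <;> simp_all [sInr]
    subst ha'
    cases b with
    | inl w => exact hab.elim
    | inr w => exact ⟨w, hab, hb⟩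
  · rintro ⟨w, hw, rfl⟩
    refine ⟨?_, Sum.inr v, Sum.inr w, rfl, rfl, hw⟩
    intro h
    exact (G₂.G.ne_of_adj hw) (sInr_inj h)

lemma series_nbr_mid :
    (seriesTTG G₁ G₂).G.neighborSet (sInl G₁ G₂ G₁.t) =
      sInl G₁ G₂ '' (G₁.G.neighborSet G₁.t) ∪ sInr G₁ G₂ '' (G₂.G.neighborSet G₂.s) := by
  ext x
  simp only [SimpleGraph.mem_neighborSet, Set.mem_union, Set.mem_image]
  constructor
  · rintro ⟨hne, a, b, ha, hb, hab⟩
    have ha' : a = Sum.inl G₁.t ∨ a = Sum.inr G₂.s := by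
      rcases (series_mk_eq G₁ G₂).mp ha with h | ⟨h1, h2⟩ | ⟨h1, h2⟩ <;> simp_all [sInl]
    rcases ha' with rfl | rfl
    · cases b with
      | inl w => exact Or.inl ⟨w, hab, hb⟩
      | inr w => exact hab.elim
    · cases b with
      | inl w => exact hab.elim
      | inr w => exact Or.inr ⟨w, hab, hb⟩
  · have key : sInl G₁ G₂ G₁.t = sInr G₁ G₂ G₂.s := sInl_eq_sInr.mpr ⟨rfl, rfl⟩
    rintro (⟨w, hw, rfl⟩ | ⟨w, hw, rfl⟩)
    · refine ⟨fun h => (G₁.G.ne_of_adj hw) (sInl_inj h), Sum.inl G₁.t, Sum.inl w, rfl, rfl, hw⟩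
    · refine ⟨?_, Sum.inr G₂.s, Sum.inr w, key.symm, rfl, hw⟩
      rw [key]
      exact fun h => (G₂.G.ne_of_adj hw) (sInr_inj h)

lemma series_s_ne_t (h₁ : G₁.s ≠ G₁.t) : (seriesTTG G₁ G₂).s ≠ (seriesTTG G₁ G₂).t := by
  intro h
  rcases (series_mk_eq G₁ G₂).mp h with h | ⟨h1, h2⟩ | ⟨h1, h2⟩ <;> simp_all

lemma series_not_adj (h₁ : G₁.s ≠ G₁.t) (h₂ : G₂.s ≠ G₂.t) :
    ¬ (seriesTTG G₁ G₂).G.Adj (seriesTTG G₁ G₂).s (seriesTTG G₁ G₂).t := by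
  rintro ⟨hne, a, b, ha, hb, hab⟩
  have ha' : a = Sum.inl G₁.s := by
    rcases (series_mk_eq G₁ G₂).mp ha with h | ⟨h1, h2⟩ | ⟨h1, h2⟩ <;> simp_all
  have hb' : b = Sum.inr G₂.t := by
    rcases (series_mk_eq G₁ G₂).mp hb with h | ⟨h1, h2⟩ | ⟨h1, h2⟩ <;> simp_all
  subst ha'; subst hb'
  exact hab

end SeriesLemmas2
section SeriesLemmas3

variable {G₁ G₂ : TTG}

lemma sInl_injective : Function.Injective (sInl G₁ G₂) := fun _ _ h => sInl_inj h
lemma sInr_injective : Function.Injective (sInr G₁ G₂) := fun _ _ h => sInr_inj h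

lemma series_finite [Finite G₁.V] [Finite G₂.V] : Finite (seriesTTG G₁ G₂).V :=
  Quotient.finite _

lemma series_deg_inl [Finite G₁.V] {v : G₁.V} (hv : v ≠ G₁.t) :
    ((seriesTTG G₁ G₂).G.neighborSet (sInl G₁ G₂ v)).ncard =
      (G₁.G.neighborSet v).ncard := by
  rw [series_nbr_inl hv, Set.ncard_image_of_injective _ sInl_injective]

lemma series_deg_inr [Finite G₂.V] {v : G₂.V} (hv : v ≠ G₂.s) :
    ((seriesTTG G₁ G₂).G.neighborSet (sInr G₁ G₂ v)).ncard =
      (G₂.G.neighborSet v).ncard := by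
  rw [series_nbr_inr hv, Set.ncard_image_of_injective _ sInr_injective]

lemma series_deg_mid [Finite G₁.V] [Finite G₂.V] :
    ((seriesTTG G₁ G₂).G.neighborSet (sInl G₁ G₂ G₁.t)).ncard =
      (G₁.G.neighborSet G₁.t).ncard + (G₂.G.neighborSet G₂.s).ncard := by
  rw [series_nbr_mid, Set.ncard_union_eq, Set.ncard_image_of_injective _ sInl_injective,
    Set.ncard_image_of_injective _ sInr_injective]
  · refine Set.disjoint_left.mpr ?_
    rintro x ⟨w, hw, rfl⟩ ⟨w', hw', h⟩
    have := (sInl_eq_sInr.mp h.symm).1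
    exact (G₁.G.ne_of_adj hw) this.symm

def sCol (c₁ : G₁.V → Bool) (c₂ : G₂.V → Bool) (h : c₂ G₂.s = c₁ G₁.t) :
    (seriesTTG G₁ G₂).V → Bool :=
  Quotient.lift (Sum.elim c₁ c₂) (by
    intro a b hab
    induction hab with
    | rel x y hxy => obtain ⟨rfl, rfl⟩ := hxy; exact h.symm
    | refl x => rfl
    | symm _ _ _ ih => exact ih.symm
    | trans _ _ _ _ _ ih1 ih2 => exact ih1.trans ih2)

@[simp] lemma sCol_inl (c₁ : G₁.V → Bool) (c₂ : G₂.V → Bool) (h : c₂ G₂.s = c₁ G₁.t)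
    (v : G₁.V) : sCol c₁ c₂ h (sInl G₁ G₂ v) = c₁ v := rfl

@[simp] lemma sCol_inr (c₁ : G₁.V → Bool) (c₂ : G₂.V → Bool) (h : c₂ G₂.s = c₁ G₁.t)
    (v : G₂.V) : sCol c₁ c₂ h (sInr G₁ G₂ v) = c₂ v := rfl

lemma sCol_proper (c₁ : G₁.V → Bool) (c₂ : G₂.V → Bool) (h : c₂ G₂.s = c₁ G₁.t)
    (h₁ : ∀ u v, G₁.G.Adj u v → c₁ u ≠ c₁ v) (h₂ : ∀ u v, G₂.G.Adj u v → c₂ u ≠ c₂ v) :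
    ∀ x y, (seriesTTG G₁ G₂).G.Adj x y → sCol c₁ c₂ h x ≠ sCol c₁ c₂ h y := by
  rintro x y ⟨hne, a, b, rfl, rfl, hab⟩
  cases a <;> cases b <;> simp only [sumAdj] at hab
  · exact h₁ _ _ hab
  · exact h₂ _ _ hab

end SeriesLemmas3
section ParallelLemmas

variable {G₁ G₂ : TTG}

def pInl (G₁ G₂ : TTG) (v : G₁.V) : (parallelTTG G₁ G₂).V := Quotient.mk _ (Sum.inl v)
def pInr (G₁ G₂ : TTG) (v : G₂.V) : (parallelTTG G₁ G₂).V := Quotient.mk _ (Sum.inr v)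

lemma parallel_mk_eq (h₁ : G₁.s ≠ G₁.t) (h₂ : G₂.s ≠ G₂.t) {a b : G₁.V ⊕ G₂.V} :
    (Quotient.mk (Relation.EqvGen.setoid fun x y : G₁.V ⊕ G₂.V =>
        (x = Sum.inl G₁.s ∧ y = Sum.inr G₂.s) ∨ (x = Sum.inl G₁.t ∧ y = Sum.inr G₂.t)) a =
      Quotient.mk _ b) ↔
    a = b ∨ (a = Sum.inl G₁.s ∧ b = Sum.inr G₂.s) ∨ (a = Sum.inr G₂.s ∧ b = Sum.inl G₁.s) ∨
      (a = Sum.inl G₁.t ∧ b = Sum.inr G₂.t) ∨ (a = Sum.inr G₂.t ∧ b = Sum.inl G₁.t) := by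
  constructor
  · intro h
    have h' := Quotient.exact h
    refine eqvgen_to (R := fun a b => a = b ∨ (a = Sum.inl G₁.s ∧ b = Sum.inr G₂.s) ∨
      (a = Sum.inr G₂.s ∧ b = Sum.inl G₁.s) ∨ (a = Sum.inl G₁.t ∧ b = Sum.inr G₂.t) ∨
      (a = Sum.inr G₂.t ∧ b = Sum.inl G₁.t)) ?_ ?_ h'
    · constructor
      · intro x; exact Or.inl rfl
      · rintro x y (rfl | ⟨rfl, rfl⟩ | ⟨rfl, rfl⟩ | ⟨rfl, rfl⟩ | ⟨rfl, rfl⟩) <;> simp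
      · rintro x y z hxy hyz
        rcases hxy with rfl | ⟨rfl, rfl⟩ | ⟨rfl, rfl⟩ | ⟨rfl, rfl⟩ | ⟨rfl, rfl⟩ <;>
          rcases hyz with rfl | ⟨h, rfl⟩ | ⟨h, rfl⟩ | ⟨h, rfl⟩ | ⟨h, rfl⟩ <;> simp_all
    · rintro x y (⟨rfl, rfl⟩ | ⟨rfl, rfl⟩)
      · exact Or.inr (Or.inl ⟨rfl, rfl⟩)
      · exact Or.inr (Or.inr (Or.inr (Or.inl ⟨rfl, rfl⟩)))
  · rintro (rfl | ⟨rfl, rfl⟩ | ⟨rfl, rfl⟩ | ⟨rfl, rfl⟩ | ⟨rfl, rfl⟩)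
    · rfl
    · exact Quotient.sound (Relation.EqvGen.rel _ _ (Or.inl ⟨rfl, rfl⟩))
    · exact Quotient.sound (Relation.EqvGen.symm _ _ (Relation.EqvGen.rel _ _ (Or.inl ⟨rfl, rfl⟩)))
    · exact Quotient.sound (Relation.EqvGen.rel _ _ (Or.inr ⟨rfl, rfl⟩))
    · exact Quotient.sound (Relation.EqvGen.symm _ _ (Relation.EqvGen.rel _ _ (Or.inr ⟨rfl, rfl⟩)))

variable (h₁ : G₁.s ≠ G₁.t) (h₂ : G₂.s ≠ G₂.t)
include h₁ h₂

lemma pInl_inj {a b : G₁.V} (h : pInl G₁ G₂ a = pInl G₁ G₂ b) : a = b := by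
  rcases (parallel_mk_eq h₁ h₂).mp h with h | ⟨ha, hb⟩ | ⟨ha, hb⟩ | ⟨ha, hb⟩ | ⟨ha, hb⟩ <;>
    simp_all

lemma pInr_inj {a b : G₂.V} (h : pInr G₁ G₂ a = pInr G₁ G₂ b) : a = b := by
  rcases (parallel_mk_eq h₁ h₂).mp h with h | ⟨ha, hb⟩ | ⟨ha, hb⟩ | ⟨ha, hb⟩ | ⟨ha, hb⟩ <;>
    simp_all

lemma pInl_eq_pInr {a : G₁.V} {b : G₂.V} :
    pInl G₁ G₂ a = pInr G₁ G₂ b ↔ (a = G₁.s ∧ b = G₂.s) ∨ (a = G₁.t ∧ b = G₂.t) := by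
  constructor
  · intro h
    rcases (parallel_mk_eq h₁ h₂).mp h with h | ⟨ha, hb⟩ | ⟨ha, hb⟩ | ⟨ha, hb⟩ | ⟨ha, hb⟩ <;>
      simp_all
  · rintro (⟨rfl, rfl⟩ | ⟨rfl, rfl⟩)
    · exact Quotient.sound (Relation.EqvGen.rel _ _ (Or.inl ⟨rfl, rfl⟩))
    · exact Quotient.sound (Relation.EqvGen.rel _ _ (Or.inr ⟨rfl, rfl⟩))

omit h₁ h₂

lemma parallel_cases (x : (parallelTTG G₁ G₂).V) :
    (∃ v, x = pInl G₁ G₂ v) ∨ (∃ v, x = pInr G₁ G₂ v) := by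
  obtain ⟨a, rfl⟩ := Quotient.exists_rep x
  cases a with
  | inl v => exact Or.inl ⟨v, rfl⟩
  | inr v => exact Or.inr ⟨v, rfl⟩

lemma parallel_s : (parallelTTG G₁ G₂).s = pInl G₁ G₂ G₁.s := rfl
lemma parallel_t : (parallelTTG G₁ G₂).t = pInl G₁ G₂ G₁.t := rfl

lemma parallel_finite [Finite G₁.V] [Finite G₂.V] : Finite (parallelTTG G₁ G₂).V :=
  Quotient.finite _

include h₁ h₂

lemma parallel_s_ne_t : (parallelTTG G₁ G₂).s ≠ (parallelTTG G₁ G₂).t := by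
  intro h
  rcases (parallel_mk_eq h₁ h₂).mp h with h | ⟨ha, hb⟩ | ⟨ha, hb⟩ | ⟨ha, hb⟩ | ⟨ha, hb⟩ <;>
    simp_all

lemma parallel_nbr_inl {v : G₁.V} (hv1 : v ≠ G₁.s) (hv2 : v ≠ G₁.t) :
    (parallelTTG G₁ G₂).G.neighborSet (pInl G₁ G₂ v) = pInl G₁ G₂ '' (G₁.G.neighborSet v) := by
  ext x
  simp only [SimpleGraph.mem_neighborSet, Set.mem_image]
  constructor
  · rintro ⟨hne, a, b, ha, hb, hab⟩
    have ha' : a = Sum.inl v := by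
      rcases (parallel_mk_eq h₁ h₂).mp ha with h | ⟨ha1, hb1⟩ | ⟨ha1, hb1⟩ | ⟨ha1, hb1⟩ |
        ⟨ha1, hb1⟩ <;> simp_all [pInl]
    subst ha'
    cases b with
    | inl w => exact ⟨w, hab, hb⟩
    | inr w => exact hab.elim
  · rintro ⟨w, hw, rfl⟩
    refine ⟨?_, Sum.inl v, Sum.inl w, rfl, rfl, hw⟩
    intro h
    exact (G₁.G.ne_of_adj hw) (pInl_inj h₁ h₂ h)

lemma parallel_nbr_inr {v : G₂.V} (hv1 : v ≠ G₂.s) (hv2 : v ≠ G₂.t) :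
    (parallelTTG G₁ G₂).G.neighborSet (pInr G₁ G₂ v) = pInr G₁ G₂ '' (G₂.G.neighborSet v) := by
  ext x
  simp only [SimpleGraph.mem_neighborSet, Set.mem_image]
  constructor
  · rintro ⟨hne, a, b, ha, hb, hab⟩
    have ha' : a = Sum.inr v := by
      rcases (parallel_mk_eq h₁ h₂).mp ha with h | ⟨ha1, hb1⟩ | ⟨ha1, hb1⟩ | ⟨ha1, hb1⟩ |
        ⟨ha1, hb1⟩ <;> simp_all [pInr]
    subst ha'
    cases b with
    | inl w => exact hab.elim
    | inr w => exact ⟨w, hab, hb⟩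
  · rintro ⟨w, hw, rfl⟩
    refine ⟨?_, Sum.inr v, Sum.inr w, rfl, rfl, hw⟩
    intro h
    exact (G₂.G.ne_of_adj hw) (pInr_inj h₁ h₂ h)

lemma parallel_nbr_s :
    (parallelTTG G₁ G₂).G.neighborSet (pInl G₁ G₂ G₁.s) =
      pInl G₁ G₂ '' (G₁.G.neighborSet G₁.s) ∪ pInr G₁ G₂ '' (G₂.G.neighborSet G₂.s) := by
  ext x
  simp only [SimpleGraph.mem_neighborSet, Set.mem_union, Set.mem_image]
  constructor
  · rintro ⟨hne, a, b, ha, hb, hab⟩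
    have ha' : a = Sum.inl G₁.s ∨ a = Sum.inr G₂.s := by
      rcases (parallel_mk_eq h₁ h₂).mp ha with h | ⟨ha1, hb1⟩ | ⟨ha1, hb1⟩ | ⟨ha1, hb1⟩ |
        ⟨ha1, hb1⟩ <;> simp_all [pInl]
    rcases ha' with rfl | rfl
    · cases b with
      | inl w => exact Or.inl ⟨w, hab, hb⟩
      | inr w => exact hab.elim
    · cases b with
      | inl w => exact hab.elim
      | inr w => exact Or.inr ⟨w, hab, hb⟩
  · have key : pInl G₁ G₂ G₁.s = pInr G₁ G₂ G₂.s :=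
      (pInl_eq_pInr h₁ h₂).mpr (Or.inl ⟨rfl, rfl⟩)
    rintro (⟨w, hw, rfl⟩ | ⟨w, hw, rfl⟩)
    · exact ⟨fun h => (G₁.G.ne_of_adj hw) (pInl_inj h₁ h₂ h), Sum.inl G₁.s, Sum.inl w,
        rfl, rfl, hw⟩
    · refine ⟨?_, Sum.inr G₂.s, Sum.inr w, key.symm, rfl, hw⟩
      rw [key]
      exact fun h => (G₂.G.ne_of_adj hw) (pInr_inj h₁ h₂ h)

lemma parallel_nbr_t :
    (parallelTTG G₁ G₂).G.neighborSet (pInl G₁ G₂ G₁.t) =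
      pInl G₁ G₂ '' (G₁.G.neighborSet G₁.t) ∪ pInr G₁ G₂ '' (G₂.G.neighborSet G₂.t) := by
  ext x
  simp only [SimpleGraph.mem_neighborSet, Set.mem_union, Set.mem_image]
  constructor
  · rintro ⟨hne, a, b, ha, hb, hab⟩
    have ha' : a = Sum.inl G₁.t ∨ a = Sum.inr G₂.t := by
      rcases (parallel_mk_eq h₁ h₂).mp ha with h | ⟨ha1, hb1⟩ | ⟨ha1, hb1⟩ | ⟨ha1, hb1⟩ |
        ⟨ha1, hb1⟩ <;> simp_all [pInl]
    rcases ha' with rfl | rfl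
    · cases b with
      | inl w => exact Or.inl ⟨w, hab, hb⟩
      | inr w => exact hab.elim
    · cases b with
      | inl w => exact hab.elim
      | inr w => exact Or.inr ⟨w, hab, hb⟩
  · have key : pInl G₁ G₂ G₁.t = pInr G₁ G₂ G₂.t :=
      (pInl_eq_pInr h₁ h₂).mpr (Or.inr ⟨rfl, rfl⟩)
    rintro (⟨w, hw, rfl⟩ | ⟨w, hw, rfl⟩)
    · exact ⟨fun h => (G₁.G.ne_of_adj hw) (pInl_inj h₁ h₂ h), Sum.inl G₁.t, Sum.inl w,
        rfl, rfl, hw⟩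
    · refine ⟨?_, Sum.inr G₂.t, Sum.inr w, key.symm, rfl, hw⟩
      rw [key]
      exact fun h => (G₂.G.ne_of_adj hw) (pInr_inj h₁ h₂ h)

lemma parallel_deg_inl [Finite G₁.V] {v : G₁.V} (hv1 : v ≠ G₁.s) (hv2 : v ≠ G₁.t) :
    ((parallelTTG G₁ G₂).G.neighborSet (pInl G₁ G₂ v)).ncard = (G₁.G.neighborSet v).ncard := by
  rw [parallel_nbr_inl h₁ h₂ hv1 hv2,
    Set.ncard_image_of_injective _ (fun a b h => pInl_inj h₁ h₂ h)]

lemma parallel_deg_inr [Finite G₂.V] {v : G₂.V} (hv1 : v ≠ G₂.s) (hv2 : v ≠ G₂.t) :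
    ((parallelTTG G₁ G₂).G.neighborSet (pInr G₁ G₂ v)).ncard = (G₂.G.neighborSet v).ncard := by
  rw [parallel_nbr_inr h₁ h₂ hv1 hv2,
    Set.ncard_image_of_injective _ (fun a b h => pInr_inj h₁ h₂ h)]

lemma parallel_deg_s [Finite G₁.V] [Finite G₂.V] (hna : ¬ G₂.G.Adj G₂.s G₂.t) :
    ((parallelTTG G₁ G₂).G.neighborSet (pInl G₁ G₂ G₁.s)).ncard =
      (G₁.G.neighborSet G₁.s).ncard + (G₂.G.neighborSet G₂.s).ncard := by
  rw [parallel_nbr_s h₁ h₂, Set.ncard_union_eq,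
    Set.ncard_image_of_injective _ (fun a b h => pInl_inj h₁ h₂ h),
    Set.ncard_image_of_injective _ (fun a b h => pInr_inj h₁ h₂ h)]
  refine Set.disjoint_left.mpr ?_
  rintro x ⟨w, hw, rfl⟩ ⟨w', hw', h⟩
  rcases (pInl_eq_pInr h₁ h₂).mp h.symm with ⟨hx, hy⟩ | ⟨hx, hy⟩
  · exact (G₁.G.ne_of_adj hw) hx.symm
  · subst hy; exact hna hw'

lemma parallel_deg_t [Finite G₁.V] [Finite G₂.V] (hna : ¬ G₂.G.Adj G₂.s G₂.t) :
    ((parallelTTG G₁ G₂).G.neighborSet (pInl G₁ G₂ G₁.t)).ncard =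
      (G₁.G.neighborSet G₁.t).ncard + (G₂.G.neighborSet G₂.t).ncard := by
  rw [parallel_nbr_t h₁ h₂, Set.ncard_union_eq,
    Set.ncard_image_of_injective _ (fun a b h => pInl_inj h₁ h₂ h),
    Set.ncard_image_of_injective _ (fun a b h => pInr_inj h₁ h₂ h)]
  refine Set.disjoint_left.mpr ?_
  rintro x ⟨w, hw, rfl⟩ ⟨w', hw', h⟩
  rcases (pInl_eq_pInr h₁ h₂).mp h.symm with ⟨hx, hy⟩ | ⟨hx, hy⟩
  · subst hy; exact hna (G₂.G.adj_symm hw')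
  · exact (G₁.G.ne_of_adj hw) hx.symm

omit h₁ h₂

def pCol (c₁ : G₁.V → Bool) (c₂ : G₂.V → Bool) (hs : c₂ G₂.s = c₁ G₁.s)
    (ht : c₂ G₂.t = c₁ G₁.t) : (parallelTTG G₁ G₂).V → Bool :=
  Quotient.lift (Sum.elim c₁ c₂) (by
    intro a b hab
    induction hab with
    | rel x y hxy => rcases hxy with ⟨rfl, rfl⟩ | ⟨rfl, rfl⟩
                     · exact hs.symm
                     · exact ht.symm
    | refl x => rfl
    | symm _ _ _ ih => exact ih.symm
    | trans _ _ _ _ _ ih1 ih2 => exact ih1.trans ih2)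

@[simp] lemma pCol_inl (c₁ : G₁.V → Bool) (c₂ : G₂.V → Bool) (hs : c₂ G₂.s = c₁ G₁.s)
    (ht : c₂ G₂.t = c₁ G₁.t) (v : G₁.V) : pCol c₁ c₂ hs ht (pInl G₁ G₂ v) = c₁ v := rfl

@[simp] lemma pCol_inr (c₁ : G₁.V → Bool) (c₂ : G₂.V → Bool) (hs : c₂ G₂.s = c₁ G₁.s)
    (ht : c₂ G₂.t = c₁ G₁.t) (v : G₂.V) : pCol c₁ c₂ hs ht (pInr G₁ G₂ v) = c₂ v := rfl

lemma pCol_proper (c₁ : G₁.V → Bool) (c₂ : G₂.V → Bool) (hs : c₂ G₂.s = c₁ G₁.s)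
    (ht : c₂ G₂.t = c₁ G₁.t)
    (hp₁ : ∀ u v, G₁.G.Adj u v → c₁ u ≠ c₁ v) (hp₂ : ∀ u v, G₂.G.Adj u v → c₂ u ≠ c₂ v) :
    ∀ x y, (parallelTTG G₁ G₂).G.Adj x y → pCol c₁ c₂ hs ht x ≠ pCol c₁ c₂ hs ht y := by
  rintro x y ⟨hne, a, b, rfl, rfl, hab⟩
  cases a <;> cases b <;> simp only [sumAdj] at hab
  · exact hp₁ _ _ hab
  · exact hp₂ _ _ hab

end ParallelLemmas
section MainInv

/-- Invariant for `A` and `B` graphs. -/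
structure GInv (X : TTG) : Prop where
  fin : Finite X.V
  snt : X.s ≠ X.t
  sub : ∀ v, (X.G.neighborSet v).ncard ≤ 3
  degs : (X.G.neighborSet X.s).ncard ≤ 2
  degt : (X.G.neighborSet X.t).ncard ≤ 2
  col : ∃ c : X.V → Bool, (∀ u v, X.G.Adj u v → c u ≠ c v) ∧ c X.s = false ∧ c X.t = true

/-- Invariant for the pieces `C = edge–X–edge`. -/
structure CInvOut (Y : TTG) : Prop where
  fin : Finite Y.V
  snt : Y.s ≠ Y.t
  nadj : ¬ Y.G.Adj Y.s Y.t
  degs : (Y.G.neighborSet Y.s).ncard = 1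
  degt : (Y.G.neighborSet Y.t).ncard = 1
  sub : ∀ v, (Y.G.neighborSet v).ncard ≤ 3
  col : ∃ c : Y.V → Bool, (∀ u v, Y.G.Adj u v → c u ≠ c v) ∧ c Y.s = false ∧ c Y.t = true

def Cg (X : TTG) : TTG := seriesTTG (seriesTTG edgeTTG X) edgeTTG

lemma Bfrom_eq (X : TTG) : Bfrom X = parallelTTG (Cg X) (Cg X) := rfl

instance : Finite edgeTTG.V := inferInstanceAs (Finite Bool)

lemma edge_snt : edgeTTG.s ≠ edgeTTG.t := by
  show (false : Bool) ≠ true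
  simp

lemma edge_nbr (v : Bool) : edgeTTG.G.neighborSet v = {!v} := by
  ext w
  show v ≠ w ↔ _
  cases v <;> cases w <;> simp

lemma edge_deg (v : Bool) : (edgeTTG.G.neighborSet v).ncard = 1 := by
  rw [edge_nbr]; exact Set.ncard_singleton _

lemma edge_col_proper : ∀ u v, edgeTTG.G.Adj u v → id u ≠ id v := fun _ _ h => h

lemma edge_ginv : GInv edgeTTG where
  fin := inferInstanceAs (Finite Bool)
  snt := edge_snt
  sub := fun v => by rw [edge_deg]; omega
  degs := by rw [edge_deg]; omega
  degt := by rw [edge_deg]; omega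
  col := ⟨id, edge_col_proper, rfl, rfl⟩

lemma Cinv {X : TTG} (hX : GInv X) : CInvOut (Cg X) := by
  haveI := hX.fin
  unfold Cg
  set E := seriesTTG edgeTTG X with hE
  haveI : Finite E.V := series_finite
  haveI : Finite (seriesTTG E edgeTTG).V := series_finite
  -- facts about E
  have hEsnt : E.s ≠ E.t := series_s_ne_t edge_snt
  have hEdegs : (E.G.neighborSet E.s).ncard = 1 := by
    have : (E.G.neighborSet (sInl edgeTTG X edgeTTG.s)).ncard =
        (edgeTTG.G.neighborSet edgeTTG.s).ncard := series_deg_inl edge_snt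
    rw [series_s, this, edge_deg]
  have hEdegt : (E.G.neighborSet E.t).ncard = (X.G.neighborSet X.t).ncard := by
    rw [series_t]; exact series_deg_inr (Ne.symm hX.snt)
  have hEsub : ∀ v, (E.G.neighborSet v).ncard ≤ 3 := by
    intro v
    rcases series_cases v with ⟨w, rfl⟩ | ⟨w, rfl⟩
    · cases w with
      | false =>
        have : (false : Bool) ≠ edgeTTG.t := edge_snt
        rw [series_deg_inl this, edge_deg]; omega
      | true =>
        have : (true : Bool) = edgeTTG.t := rfl
        rw [this, series_deg_mid, edge_deg]
        have := hX.degs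
        omega
    · by_cases hw : w = X.s
      · subst hw
        have key : sInr edgeTTG X X.s = sInl edgeTTG X edgeTTG.t :=
          (sInl_eq_sInr.mpr ⟨rfl, rfl⟩).symm
        rw [key, series_deg_mid, edge_deg]
        have := hX.degs
        omega
      · rw [series_deg_inr hw]
        exact hX.sub w
  have hEcol : ∃ c : E.V → Bool, (∀ u v, E.G.Adj u v → c u ≠ c v) ∧
      c E.s = false ∧ c E.t = false := by
    obtain ⟨cX, hcX, hcXs, hcXt⟩ := hX.col
    have hmatch : (fun v => !(cX v)) X.s = id edgeTTG.t := by simp [hcXs]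
    refine ⟨sCol id (fun v => !(cX v)) hmatch, ?_, ?_, ?_⟩
    · exact sCol_proper _ _ hmatch edge_col_proper
        (fun u v h => by simpa using hcX u v h)
    · rw [series_s, sCol_inl]; rfl
    · rw [series_t, sCol_inr]; simp [hcXt]
  -- facts about Cg X = seriesTTG E edgeTTG
  constructor
  case fin => infer_instance
  case snt => exact series_s_ne_t hEsnt
  case nadj => exact series_not_adj hEsnt edge_snt
  case degs =>
    show ((seriesTTG E edgeTTG).G.neighborSet (sInl E edgeTTG E.s)).ncard = 1
    rw [series_deg_inl hEsnt, hEdegs]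
  case degt =>
    have h1 : edgeTTG.t ≠ edgeTTG.s := Ne.symm edge_snt
    show ((seriesTTG E edgeTTG).G.neighborSet (sInr E edgeTTG edgeTTG.t)).ncard = 1
    rw [series_deg_inr h1, edge_deg]
  case sub =>
    intro v
    rcases series_cases v with ⟨w, rfl⟩ | ⟨w, rfl⟩
    · by_cases hw : w = E.t
      · subst hw
        rw [series_deg_mid, hEdegt, edge_deg]
        have := hX.degt
        omega
      · rw [series_deg_inl hw]
        exact hEsub w
    · cases w with
      | false =>
        have key : sInr E edgeTTG false = sInl E edgeTTG E.t :=
          (sInl_eq_sInr.mpr ⟨rfl, rfl⟩).symm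
        rw [key, series_deg_mid, hEdegt, edge_deg]
        have := hX.degt
        omega
      | true =>
        have h1 : edgeTTG.t ≠ edgeTTG.s := Ne.symm edge_snt
        show ((seriesTTG E edgeTTG).G.neighborSet (sInr E edgeTTG edgeTTG.t)).ncard ≤ 3
        rw [series_deg_inr h1, edge_deg]; omega
  case col =>
    obtain ⟨cE, hcE, hcEs, hcEt⟩ := hEcol
    have hmatch : id edgeTTG.s = cE E.t := by rw [hcEt]; rfl
    refine ⟨sCol cE id hmatch, ?_, ?_, ?_⟩
    · exact sCol_proper _ _ hmatch hcE edge_col_proper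
    · show sCol cE id hmatch (sInl E edgeTTG E.s) = false
      rw [sCol_inl, hcEs]
    · show sCol cE id hmatch (sInr E edgeTTG edgeTTG.t) = true
      rw [sCol_inr]; rfl

end MainInv
section Final

lemma Binv {X : TTG} (hX : GInv X) :
    GInv (Bfrom X) ∧ ((Bfrom X).G.neighborSet (Bfrom X).s).ncard = 2 ∧
      ((Bfrom X).G.neighborSet (Bfrom X).t).ncard = 2 := by
  have hC := Cinv hX
  haveI := hC.fin
  rw [Bfrom_eq]
  set C := Cg X with hCdef
  have h₁ : C.s ≠ C.t := hC.snt
  haveI : Finite (parallelTTG C C).V := parallel_finite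
  have hds : ((parallelTTG C C).G.neighborSet (pInl C C C.s)).ncard = 2 := by
    rw [parallel_deg_s h₁ h₁ hC.nadj, hC.degs]
  have hdt : ((parallelTTG C C).G.neighborSet (pInl C C C.t)).ncard = 2 := by
    rw [parallel_deg_t h₁ h₁ hC.nadj, hC.degt]
  have hsub : ∀ v, ((parallelTTG C C).G.neighborSet v).ncard ≤ 3 := by
    intro v
    rcases parallel_cases v with ⟨w, rfl⟩ | ⟨w, rfl⟩
    · by_cases hw1 : w = C.s
      · subst hw1; omega
      · by_cases hw2 : w = C.t
        · subst hw2; omega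
        · rw [parallel_deg_inl h₁ h₁ hw1 hw2]; exact hC.sub w
    · by_cases hw1 : w = C.s
      · subst hw1
        rw [show pInr C C C.s = pInl C C C.s from
          ((pInl_eq_pInr h₁ h₁).mpr (Or.inl ⟨rfl, rfl⟩)).symm]
        omega
      · by_cases hw2 : w = C.t
        · subst hw2
          rw [show pInr C C C.t = pInl C C C.t from
            ((pInl_eq_pInr h₁ h₁).mpr (Or.inr ⟨rfl, rfl⟩)).symm]
          omega
        · rw [parallel_deg_inr h₁ h₁ hw1 hw2]; exact hC.sub w
  refine ⟨⟨inferInstance, parallel_s_ne_t h₁ h₁, hsub, ?_, ?_, ?_⟩, hds, hdt⟩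
  · show ((parallelTTG C C).G.neighborSet (pInl C C C.s)).ncard ≤ 2
    omega
  · show ((parallelTTG C C).G.neighborSet (pInl C C C.t)).ncard ≤ 2
    omega
  · obtain ⟨c, hp, hs, ht⟩ := hC.col
    refine ⟨pCol c c rfl rfl, pCol_proper c c rfl rfl hp hp, ?_, ?_⟩
    · show pCol c c rfl rfl (pInl C C C.s) = false
      rw [pCol_inl, hs]
    · show pCol c c rfl rfl (pInl C C C.t) = true
      rw [pCol_inl, ht]

lemma Ainv {Z : TTG} (hZ : GInv Z) :
    GInv (parallelTTG edgeTTG (Cg Z)) ∧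
      ((parallelTTG edgeTTG (Cg Z)).G.neighborSet (parallelTTG edgeTTG (Cg Z)).s).ncard = 2 ∧
      ((parallelTTG edgeTTG (Cg Z)).G.neighborSet (parallelTTG edgeTTG (Cg Z)).t).ncard = 2 := by
  have hC := Cinv hZ
  haveI := hC.fin
  set C := Cg Z with hCdef
  have h₁ : edgeTTG.s ≠ edgeTTG.t := edge_snt
  have h₂ : C.s ≠ C.t := hC.snt
  haveI : Finite (parallelTTG edgeTTG C).V := parallel_finite
  have hds : ((parallelTTG edgeTTG C).G.neighborSet (pInl edgeTTG C edgeTTG.s)).ncard = 2 := by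
    rw [parallel_deg_s h₁ h₂ hC.nadj, hC.degs, edge_deg]
  have hdt : ((parallelTTG edgeTTG C).G.neighborSet (pInl edgeTTG C edgeTTG.t)).ncard = 2 := by
    rw [parallel_deg_t h₁ h₂ hC.nadj, hC.degt, edge_deg]
  have hsub : ∀ v, ((parallelTTG edgeTTG C).G.neighborSet v).ncard ≤ 3 := by
    intro v
    rcases parallel_cases v with ⟨w, rfl⟩ | ⟨w, rfl⟩
    · cases w with
      | false => show ((parallelTTG edgeTTG C).G.neighborSet
            (pInl edgeTTG C edgeTTG.s)).ncard ≤ 3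
                 omega
      | true => show ((parallelTTG edgeTTG C).G.neighborSet
            (pInl edgeTTG C edgeTTG.t)).ncard ≤ 3
                omega
    · by_cases hw1 : w = C.s
      · subst hw1
        rw [show pInr edgeTTG C C.s = pInl edgeTTG C edgeTTG.s from
          ((pInl_eq_pInr h₁ h₂).mpr (Or.inl ⟨rfl, rfl⟩)).symm]
        omega
      · by_cases hw2 : w = C.t
        · subst hw2
          rw [show pInr edgeTTG C C.t = pInl edgeTTG C edgeTTG.t from
            ((pInl_eq_pInr h₁ h₂).mpr (Or.inr ⟨rfl, rfl⟩)).symm]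
          omega
        · rw [parallel_deg_inr h₁ h₂ hw1 hw2]; exact hC.sub w
  refine ⟨⟨inferInstance, parallel_s_ne_t h₁ h₂, hsub, ?_, ?_, ?_⟩, hds, hdt⟩
  · show ((parallelTTG edgeTTG C).G.neighborSet (pInl edgeTTG C edgeTTG.s)).ncard ≤ 2
    omega
  · show ((parallelTTG edgeTTG C).G.neighborSet (pInl edgeTTG C edgeTTG.t)).ncard ≤ 2
    omega
  · obtain ⟨c, hp, hs, ht⟩ := hC.col
    have hhs : c C.s = id edgeTTG.s := by rw [hs]; rfl
    have hht : c C.t = id edgeTTG.t := by rw [ht]; rfl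
    refine ⟨pCol (id : edgeTTG.V → Bool) c hhs hht, pCol_proper (id : edgeTTG.V → Bool) c hhs hht edge_col_proper hp, ?_, ?_⟩
    · show pCol (id : edgeTTG.V → Bool) c hhs hht (pInl edgeTTG C edgeTTG.s) = false
      rw [pCol_inl]; rfl
    · show pCol (id : edgeTTG.V → Bool) c hhs hht (pInl edgeTTG C edgeTTG.t) = true
      rw [pCol_inl]; rfl

lemma A_ginv : ∀ n, GInv (Agraph (n + 1))
  | 0 => edge_ginv
  | (n + 1) => by
      have hB := (Binv (A_ginv n)).1
      exact (Ainv hB).1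

end Final

/-- The graphs `A_i` and `B_i` are subcubic and bipartite, with a proper
2-coloring in which the two terminals get different colors; the terminals of `B_i` (for
`i ≥ 1`) and of `A_i` (for `i ≥ 2`) have degree two. -/
theorem Agraph_Bgraph_subcubic_bipartite (i : ℕ) (hi : 1 ≤ i) :
    (∀ X ∈ ({Agraph i, Bgraph i} : Set TTG),
      (∀ v : X.V, (X.G.neighborSet v).ncard ≤ 3) ∧
      (∃ col : X.V → Bool, (∀ u v, X.G.Adj u v → col u ≠ col v) ∧ col X.s ≠ col X.t)) ∧
    ((Bgraph i).G.neighborSet (Bgraph i).s).ncard = 2 ∧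
    ((Bgraph i).G.neighborSet (Bgraph i).t).ncard = 2 ∧
    (2 ≤ i →
      ((Agraph i).G.neighborSet (Agraph i).s).ncard = 2 ∧
      ((Agraph i).G.neighborSet (Agraph i).t).ncard = 2) := by
  obtain ⟨n, rfl⟩ : ∃ n, i = n + 1 := ⟨i - 1, by omega⟩
  have hA : GInv (Agraph (n + 1)) := A_ginv n
  obtain ⟨hB, hBs, hBt⟩ := Binv hA
  refine ⟨?_, hBs, hBt, ?_⟩
  · rintro X hX
    have : X = Agraph (n + 1) ∨ X = Bgraph (n + 1) := by
      simpa [Set.mem_insert_iff] using hX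
    have hXinv : GInv X := by
      rcases this with rfl | rfl
      · exact hA
      · exact hB
    obtain ⟨c, hp, hs, ht⟩ := hXinv.col
    exact ⟨hXinv.sub, c, hp, by rw [hs, ht]; simp⟩
  · intro h2
    obtain ⟨m, rfl⟩ : ∃ m, n = m + 1 := ⟨n - 1, by omega⟩
    have hBm := (Binv (A_ginv m)).1
    exact ⟨(Ainv hBm).2.1, (Ainv hBm).2.2⟩
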